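/- arXiv:2004.08584 — 2 statements merged into one kernel-verified Lean document; each statement's English description precedes it below -/
import Mathlib

section
/- For an exchangeable bivariate Gaussian mixture in which component m has strictly largest variance σ_m², the regression slope β(y) → ρ_m and the conditional variance σ²(y) → σ_m²(1 − ρ_m²) as y → ±∞. -/
open scoped Real BigOperators
open Filter

/-- Univariate Gaussian density. -/
noncomputable def phi1 (μ σ y : ℝ) : ℝ :=
  (Real.sqrt (2 * Real.pi * σ ^ 2))⁻¹ * Real.exp (-(y - μ) ^ 2 / (2 * σ ^ 2))

/-- Posterior component probability given Y₂ = y. -/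
noncomputable def pstar (m : ℕ) (p μ σ : Fin m → ℝ) (k : Fin m) (y : ℝ) : ℝ :=
  p k * phi1 (μ k) (σ k) y / ∑ j, p j * phi1 (μ j) (σ j) y

/-- Componentwise conditional mean line. -/
noncomputable def muk (m : ℕ) (μ ρ : Fin m → ℝ) (k : Fin m) (y : ℝ) : ℝ :=
  μ k + ρ k * (y - μ k)

/-- Conditional mean of the mixture. -/
noncomputable def mucond (m : ℕ) (p μ σ ρ : Fin m → ℝ) (y : ℝ) : ℝ :=
  ∑ k, pstar m p μ σ k y * muk m μ ρ k y

/-- Regression slope β(y) = μ'(y). -/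
noncomputable def beta (m : ℕ) (p μ σ ρ : Fin m → ℝ) (y : ℝ) : ℝ :=
  ∑ k, pstar m p μ σ k y *
    (ρ k + (muk m μ ρ k y - mucond m p μ σ ρ y) * (-(y - μ k) / σ k ^ 2))

/-- Conditional variance σ²(y) of the mixture. -/
noncomputable def sig2cond (m : ℕ) (p μ σ ρ : Fin m → ℝ) (y : ℝ) : ℝ :=
  ∑ k, pstar m p μ σ k y *
    (σ k ^ 2 * (1 - ρ k ^ 2) + (muk m μ ρ k y - mucond m p μ σ ρ y) ^ 2)

/- ## Auxiliary lemmas -/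

lemma gauss_decay_atTop (a b : ℝ) (ha : 0 < a) (n : ℕ) :
    Tendsto (fun y : ℝ => (1+|y|)^n * Real.exp (-(a*y^2) + b*y)) atTop (nhds 0) := by
  have hquad : Tendsto (fun y : ℝ => -(a*y^2) + (n+b)*y) atTop atBot := by
    have h1 : Tendsto (fun y : ℝ => (n+b) - a*y) atTop atBot := by
      apply tendsto_atBot_add_const_left
      exact (tendsto_neg_atBot_iff.mpr (tendsto_const_mul_atTop_of_pos ha |>.mpr tendsto_id))
    have := (tendsto_id (α := ℝ) (x := atTop)).atTop_mul_atBot₀ h1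
    refine this.congr (fun y => by simp only [id_eq]; ring)
  have hexp : Tendsto (fun y : ℝ => Real.exp (-(a*y^2) + (n+b)*y)) atTop (nhds 0) :=
    Real.tendsto_exp_atBot.comp hquad
  refine tendsto_of_tendsto_of_tendsto_of_le_of_le' tendsto_const_nhds hexp ?_ ?_
  · filter_upwards with y; positivity
  · filter_upwards [eventually_ge_atTop (0:ℝ)] with y hy
    have habs : |y| = y := abs_of_nonneg hy
    have hlog : Real.log (1 + y) ≤ y := by
      have := Real.log_le_sub_one_of_pos (x := 1 + y) (by linarith)
      linarith
    have h1 : (1+|y|)^n = Real.exp ((n:ℝ) * Real.log (1+y)) := by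
      rw [habs, Real.exp_nat_mul, Real.exp_log (by linarith)]
    rw [h1, ← Real.exp_add]
    apply Real.exp_le_exp.2
    have : (n:ℝ) * Real.log (1+y) ≤ n * y :=
      mul_le_mul_of_nonneg_left hlog (Nat.cast_nonneg n)
    nlinarith

lemma gauss_decay_atBot (a b : ℝ) (ha : 0 < a) (n : ℕ) :
    Tendsto (fun y : ℝ => (1+|y|)^n * Real.exp (-(a*y^2) + b*y)) atBot (nhds 0) := by
  have h := (gauss_decay_atTop a (-b) ha n).comp tendsto_neg_atBot_atTop
  refine h.congr (fun y => ?_)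
  simp only [Function.comp_apply, abs_neg]
  ring_nf

lemma phi1_pos (μ σ y : ℝ) (hσ : 0 < σ) : 0 < phi1 μ σ y := by
  unfold phi1
  have h : 0 < 2 * Real.pi * σ ^ 2 := by positivity
  positivity

lemma ratio_eq (pk pL μk μL σk σL : ℝ) (hpk : 0 < pk) (hpL : 0 < pL)
    (hσk : 0 < σk) (hσL : 0 < σL) (hlt : σk < σL) :
    ∃ K a b : ℝ, 0 < K ∧ 0 < a ∧
      ∀ y, pk * phi1 μk σk y / (pL * phi1 μL σL y) = K * Real.exp (-(a*y^2) + b*y) := by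
  set a : ℝ := 1/(2*σk^2) - 1/(2*σL^2) with ha_def
  set b : ℝ := μk/σk^2 - μL/σL^2 with hb_def
  set c : ℝ := -μk^2/(2*σk^2) + μL^2/(2*σL^2) with hc_def
  have hAk : 0 < Real.sqrt (2 * Real.pi * σk ^ 2) := by
    have : 0 < 2 * Real.pi * σk ^ 2 := by positivity
    positivity
  have hAL : 0 < Real.sqrt (2 * Real.pi * σL ^ 2) := by
    have : 0 < 2 * Real.pi * σL ^ 2 := by positivity
    positivity
  refine ⟨(pk * (Real.sqrt (2 * Real.pi * σk ^ 2))⁻¹ /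
      (pL * (Real.sqrt (2 * Real.pi * σL ^ 2))⁻¹)) * Real.exp c, a, b, by positivity, ?_, ?_⟩
  · rw [ha_def]
    have h1 : 0 < σk^2 := by positivity
    have h2 : σk^2 < σL^2 := by nlinarith
    have : (0:ℝ) < 1/(2*σk^2) - 1/(2*σL^2) := by
      rw [sub_pos]
      apply div_lt_div_of_pos_left <;> nlinarith
    linarith
  · intro y
    have hexp : Real.exp (-(y - μk)^2/(2*σk^2)) / Real.exp (-(y - μL)^2/(2*σL^2))
        = Real.exp c * Real.exp (-(a*y^2) + b*y) := by
      rw [← Real.exp_add, ← Real.exp_sub]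
      congr 1
      rw [ha_def, hb_def, hc_def]
      field_simp
      ring
    unfold phi1
    rw [show pk * ((Real.sqrt (2 * Real.pi * σk ^ 2))⁻¹ * Real.exp (-(y - μk) ^ 2 / (2 * σk ^ 2)))
        = (pk * (Real.sqrt (2 * Real.pi * σk ^ 2))⁻¹) * Real.exp (-(y - μk) ^ 2 / (2 * σk ^ 2)) by
        ring,
      show pL * ((Real.sqrt (2 * Real.pi * σL ^ 2))⁻¹ * Real.exp (-(y - μL) ^ 2 / (2 * σL ^ 2)))
        = (pL * (Real.sqrt (2 * Real.pi * σL ^ 2))⁻¹) * Real.exp (-(y - μL) ^ 2 / (2 * σL ^ 2)) by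
        ring,
      mul_div_mul_comm]
    rw [show -(y - μk) ^ 2 / (2 * σk ^ 2) = -(y - μk)^2/(2*σk^2) by ring,
      show -(y - μL) ^ 2 / (2 * σL ^ 2) = -(y - μL)^2/(2*σL^2) by ring, hexp]
    ring

section Basic

variable (m : ℕ) (p μ σ ρ : Fin (m + 1) → ℝ)
  (hp : ∀ k, 0 < p k) (hσ : ∀ k, 0 < σ k)

include hp hσ

lemma S_pos (y : ℝ) : 0 < ∑ j, p j * phi1 (μ j) (σ j) y :=
  Finset.sum_pos (fun j _ => mul_pos (hp j) (phi1_pos _ _ _ (hσ j))) Finset.univ_nonempty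

lemma pstar_pos (k : Fin (m+1)) (y : ℝ) : 0 < pstar (m+1) p μ σ k y :=
  div_pos (mul_pos (hp k) (phi1_pos _ _ _ (hσ k))) (S_pos m p μ σ hp hσ y)

lemma pstar_le_one (k : Fin (m+1)) (y : ℝ) : pstar (m+1) p μ σ k y ≤ 1 := by
  unfold pstar
  rw [div_le_one (S_pos m p μ σ hp hσ y)]
  exact Finset.single_le_sum
    (fun j _ => le_of_lt (mul_pos (hp j) (phi1_pos _ _ _ (hσ j)))) (Finset.mem_univ k)

lemma pstar_sum_one (y : ℝ) : ∑ k, pstar (m+1) p μ σ k y = 1 := by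
  unfold pstar
  rw [← Finset.sum_div, div_self (ne_of_gt (S_pos m p μ σ hp hσ y))]

lemma pstar_le_ratio (k : Fin (m+1)) (y : ℝ) :
    pstar (m+1) p μ σ k y ≤
      p k * phi1 (μ k) (σ k) y /
        (p (Fin.last m) * phi1 (μ (Fin.last m)) (σ (Fin.last m)) y) := by
  unfold pstar
  apply div_le_div_of_nonneg_left
    (le_of_lt (mul_pos (hp k) (phi1_pos _ _ _ (hσ k))))
    (mul_pos (hp _) (phi1_pos _ _ _ (hσ _)))
  exact Finset.single_le_sum
    (fun j _ => le_of_lt (mul_pos (hp j) (phi1_pos _ _ _ (hσ j)))) (Finset.mem_univ _)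

lemma pstar_decay (hdom : ∀ k, k ≠ Fin.last m → σ k < σ (Fin.last m))
    (l : Filter ℝ) (hl : l = atTop ∨ l = atBot)
    (k : Fin (m+1)) (hk : k ≠ Fin.last m) (n : ℕ) :
    Tendsto (fun y => pstar (m+1) p μ σ k y * (1+|y|)^n) l (nhds 0) := by
  obtain ⟨K, a, b, hK, ha, heq⟩ := ratio_eq (p k) (p (Fin.last m)) (μ k) (μ (Fin.last m))
    (σ k) (σ (Fin.last m)) (hp k) (hp (Fin.last m)) (hσ k) (hσ (Fin.last m)) (hdom k hk)
  have hlim : Tendsto (fun y : ℝ => K * ((1+|y|)^n * Real.exp (-(a*y^2)+b*y))) l (nhds 0) := by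
    rcases hl with rfl | rfl
    · simpa using (gauss_decay_atTop a b ha n).const_mul K
    · simpa using (gauss_decay_atBot a b ha n).const_mul K
  apply squeeze_zero_norm _ hlim
  intro y
  have h0 : 0 ≤ pstar (m+1) p μ σ k y := le_of_lt (pstar_pos m p μ σ hp hσ k y)
  have h1 : (0:ℝ) ≤ (1+|y|)^n := by positivity
  rw [Real.norm_eq_abs, abs_of_nonneg (mul_nonneg h0 h1)]
  calc pstar (m+1) p μ σ k y * (1+|y|)^n
      ≤ (K * Real.exp (-(a*y^2)+b*y)) * (1+|y|)^n := by
        apply mul_le_mul_of_nonneg_right _ h1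
        rw [← heq y]
        exact pstar_le_ratio m p μ σ hp hσ k y
    _ = K * ((1+|y|)^n * Real.exp (-(a*y^2)+b*y)) := by ring

lemma pstar_last_tendsto_one (hdom : ∀ k, k ≠ Fin.last m → σ k < σ (Fin.last m))
    (l : Filter ℝ) (hl : l = atTop ∨ l = atBot) :
    Tendsto (fun y => pstar (m+1) p μ σ (Fin.last m) y) l (nhds 1) := by
  have hid : ∀ y, pstar (m+1) p μ σ (Fin.last m) y
      = 1 - ∑ k ∈ Finset.univ.erase (Fin.last m), pstar (m+1) p μ σ k y := by
    intro y
    have := Finset.sum_erase_add Finset.univ (fun k => pstar (m+1) p μ σ k y)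
      (Finset.mem_univ (Fin.last m))
    rw [pstar_sum_one m p μ σ hp hσ y] at this
    linarith
  have hsum : Tendsto (fun y => ∑ k ∈ Finset.univ.erase (Fin.last m),
      pstar (m+1) p μ σ k y) l (nhds 0) := by
    have := tendsto_finset_sum (f := fun k y => pstar (m+1) p μ σ k y)
      (a := fun _ => (0:ℝ)) (Finset.univ.erase (Fin.last m)) (fun k hk => by
        have hk' : k ≠ Fin.last m := Finset.ne_of_mem_erase hk
        simpa using pstar_decay m p μ σ hp hσ hdom l hl k hk' 0)
    simpa using this
  have := tendsto_const_nhds (x := (1:ℝ)) (f := l) |>.sub hsum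
  simp only [sub_zero] at this
  exact this.congr (fun y => (hid y).symm)

end Basic
set_option maxHeartbeats 1000000 in
lemma master (m : ℕ) (p μ σ ρ : Fin (m + 1) → ℝ)
    (hp : ∀ k, 0 < p k) (hσ : ∀ k, 0 < σ k)
    (hdom : ∀ k, k ≠ Fin.last m → σ k < σ (Fin.last m))
    (l : Filter ℝ) (hl : l = atTop ∨ l = atBot) :
    Tendsto (beta (m + 1) p μ σ ρ) l (nhds (ρ (Fin.last m))) ∧
    Tendsto (sig2cond (m + 1) p μ σ ρ) l
      (nhds (σ (Fin.last m) ^ 2 * (1 - ρ (Fin.last m) ^ 2))) := by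
  set L := Fin.last m with hL
  set A : Fin (m+1) → ℝ := fun k => |μ k| + |ρ k| * (1 + |μ k|) with hA_def
  set SA : ℝ := ∑ k, A k with hSA_def
  have hA0 : ∀ k, 0 ≤ A k := fun k => by
    have : A k = |μ k| + |ρ k| * (1 + |μ k|) := rfl
    rw [this]; positivity
  have hSA0 : 0 ≤ SA := Finset.sum_nonneg fun k _ => hA0 k
  have hy2 : ∀ y : ℝ, (1:ℝ) + |y| ≤ (1 + |y|)^2 := fun y => by nlinarith [abs_nonneg y]
  have hy1 : ∀ y : ℝ, (1:ℝ) ≤ (1 + |y|)^2 := fun y => by nlinarith [abs_nonneg y]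
  -- bound on muk
  have hmuk : ∀ k y, |muk (m+1) μ ρ k y| ≤ A k * (1 + |y|) := by
    intro k y
    unfold muk
    have h2 : |y - μ k| ≤ |y| + |μ k| := abs_sub y (μ k)
    have h1 : |μ k + ρ k * (y - μ k)| ≤ |μ k| + |ρ k| * (|y| + |μ k|) :=
      calc |μ k + ρ k * (y - μ k)| ≤ |μ k| + |ρ k * (y - μ k)| := abs_add_le _ _
        _ = |μ k| + |ρ k| * |y - μ k| := by rw [abs_mul]
        _ ≤ |μ k| + |ρ k| * (|y| + |μ k|) := by gcongr
    have hAk : A k = |μ k| + |ρ k| * (1 + |μ k|) := rfl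
    rw [hAk]
    nlinarith [abs_nonneg (ρ k), abs_nonneg (μ k), abs_nonneg y,
      mul_nonneg (mul_nonneg (abs_nonneg (ρ k)) (abs_nonneg (μ k))) (abs_nonneg y),
      mul_nonneg (abs_nonneg (μ k)) (abs_nonneg y)]
  -- bound on mucond
  have hmucond : ∀ y, |mucond (m+1) p μ σ ρ y| ≤ SA * (1 + |y|) := by
    intro y
    unfold mucond
    calc |∑ k, pstar (m+1) p μ σ k y * muk (m+1) μ ρ k y|
        ≤ ∑ k, |pstar (m+1) p μ σ k y * muk (m+1) μ ρ k y| :=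
          Finset.abs_sum_le_sum_abs _ _
      _ ≤ ∑ k, A k * (1 + |y|) := by
          apply Finset.sum_le_sum
          intro k _
          rw [abs_mul, abs_of_nonneg (le_of_lt (pstar_pos m p μ σ hp hσ k y))]
          calc pstar (m+1) p μ σ k y * |muk (m+1) μ ρ k y|
              ≤ 1 * (A k * (1 + |y|)) := by
                apply mul_le_mul (pstar_le_one m p μ σ hp hσ k y) (hmuk k y) (abs_nonneg _)
                norm_num
            _ = A k * (1 + |y|) := one_mul _
      _ = SA * (1 + |y|) := by rw [hSA_def, Finset.sum_mul]
  have hD : ∀ k y, |muk (m+1) μ ρ k y - mucond (m+1) p μ σ ρ y| ≤ (A k + SA) * (1 + |y|) := by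
    intro k y
    calc |muk (m+1) μ ρ k y - mucond (m+1) p μ σ ρ y|
        ≤ |muk (m+1) μ ρ k y| + |mucond (m+1) p μ σ ρ y| := abs_sub _ _
      _ ≤ A k * (1 + |y|) + SA * (1 + |y|) := add_le_add (hmuk k y) (hmucond y)
      _ = (A k + SA) * (1 + |y|) := by ring
  -- E bound
  have hE : ∀ (k : Fin (m+1)) (y : ℝ),
      |(-(y - μ k) / σ k ^ 2)| ≤ (1 + |μ k|) / σ k ^ 2 * (1 + |y|) := by
    intro k y
    have hσ2 : (0:ℝ) < σ k ^ 2 := pow_pos (hσ k) 2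
    rw [abs_div, abs_neg, abs_of_pos hσ2, div_le_iff₀ hσ2]
    have h2 : |y - μ k| ≤ |y| + |μ k| := abs_sub y (μ k)
    have h3 : (1 + |μ k|) / σ k ^ 2 * (1 + |y|) * σ k ^ 2 = (1 + |μ k|) * (1 + |y|) := by
      rw [div_mul_eq_mul_div, div_mul_eq_mul_div, div_eq_iff hσ2.ne']
    rw [h3]
    nlinarith [abs_nonneg y, abs_nonneg (μ k)]
  -- generic vanishing lemma
  have hsmall : ∀ (k : Fin (m+1)), k ≠ L → ∀ (C : ℝ), 0 ≤ C → ∀ (g : ℝ → ℝ),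
      (∀ y, |g y| ≤ C * (1 + |y|)^2) →
      Tendsto (fun y => pstar (m+1) p μ σ k y * g y) l (nhds 0) := by
    intro k hk C hC g hg
    have hlim : Tendsto (fun y => C * (pstar (m+1) p μ σ k y * (1+|y|)^2)) l (nhds 0) := by
      simpa using (pstar_decay m p μ σ hp hσ hdom l hl k hk 2).const_mul C
    apply squeeze_zero_norm _ hlim
    intro y
    have h0 : 0 ≤ pstar (m+1) p μ σ k y := le_of_lt (pstar_pos m p μ σ hp hσ k y)
    rw [Real.norm_eq_abs, abs_mul, abs_of_nonneg h0]
    calc pstar (m+1) p μ σ k y * |g y|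
        ≤ pstar (m+1) p μ σ k y * (C * (1+|y|)^2) :=
          mul_le_mul_of_nonneg_left (hg y) h0
      _ = C * (pstar (m+1) p μ σ k y * (1+|y|)^2) := by ring
  -- identity for muk L - mucond
  have hDL_id : ∀ y, muk (m+1) μ ρ L y - mucond (m+1) p μ σ ρ y
      = ∑ k ∈ Finset.univ.erase L,
          pstar (m+1) p μ σ k y * (muk (m+1) μ ρ L y - muk (m+1) μ ρ k y) := by
    intro y
    have h1 : muk (m+1) μ ρ L y - mucond (m+1) p μ σ ρ y
        = ∑ k, pstar (m+1) p μ σ k y * (muk (m+1) μ ρ L y - muk (m+1) μ ρ k y) := by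
      simp only [mul_sub]
      rw [Finset.sum_sub_distrib, ← Finset.sum_mul, pstar_sum_one m p μ σ hp hσ y, one_mul]
      rfl
    rw [h1, ← Finset.sum_erase_add _ _ (Finset.mem_univ L)]
    simp
  -- muk L - mucond → 0
  have hDL0 : Tendsto (fun y => muk (m+1) μ ρ L y - mucond (m+1) p μ σ ρ y) l (nhds 0) := by
    have hsum : Tendsto (fun y => ∑ k ∈ Finset.univ.erase L,
        pstar (m+1) p μ σ k y * (muk (m+1) μ ρ L y - muk (m+1) μ ρ k y)) l (nhds 0) := by
      have := tendsto_finset_sum (a := fun _ => (0:ℝ)) (Finset.univ.erase L) (fun k hk => by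
        have hk' : k ≠ L := Finset.ne_of_mem_erase hk
        apply hsmall k hk' (A L + A k) (add_nonneg (hA0 L) (hA0 k))
        intro y
        calc |muk (m+1) μ ρ L y - muk (m+1) μ ρ k y|
            ≤ |muk (m+1) μ ρ L y| + |muk (m+1) μ ρ k y| := abs_sub _ _
          _ ≤ A L * (1 + |y|) + A k * (1 + |y|) := add_le_add (hmuk L y) (hmuk k y)
          _ = (A L + A k) * (1 + |y|) := by ring
          _ ≤ (A L + A k) * (1 + |y|)^2 :=
              mul_le_mul_of_nonneg_left (hy2 y) (add_nonneg (hA0 L) (hA0 k)))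
      simpa using this
    exact hsum.congr (fun y => (hDL_id y).symm)
  -- (muk L - mucond) * E L → 0
  have hDLE : Tendsto (fun y => (muk (m+1) μ ρ L y - mucond (m+1) p μ σ ρ y)
      * (-(y - μ L) / σ L ^ 2)) l (nhds 0) := by
    have hBnn : (0:ℝ) ≤ (1 + |μ L|) / σ L ^ 2 := by positivity
    have hsum : Tendsto (fun y => ∑ k ∈ Finset.univ.erase L,
        pstar (m+1) p μ σ k y * ((muk (m+1) μ ρ L y - muk (m+1) μ ρ k y)
          * (-(y - μ L) / σ L ^ 2))) l (nhds 0) := by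
      have := tendsto_finset_sum (a := fun _ => (0:ℝ)) (Finset.univ.erase L) (fun k hk => by
        have hk' : k ≠ L := Finset.ne_of_mem_erase hk
        apply hsmall k hk' ((A L + A k) * ((1 + |μ L|) / σ L ^ 2))
          (mul_nonneg (add_nonneg (hA0 L) (hA0 k)) hBnn)
        intro y
        have hM : |muk (m+1) μ ρ L y - muk (m+1) μ ρ k y| ≤ (A L + A k) * (1 + |y|) := by
          calc |muk (m+1) μ ρ L y - muk (m+1) μ ρ k y|
              ≤ |muk (m+1) μ ρ L y| + |muk (m+1) μ ρ k y| := abs_sub _ _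
            _ ≤ A L * (1 + |y|) + A k * (1 + |y|) := add_le_add (hmuk L y) (hmuk k y)
            _ = (A L + A k) * (1 + |y|) := by ring
        calc |(muk (m+1) μ ρ L y - muk (m+1) μ ρ k y) * (-(y - μ L) / σ L ^ 2)|
            = |muk (m+1) μ ρ L y - muk (m+1) μ ρ k y| * |(-(y - μ L) / σ L ^ 2)| := abs_mul _ _
          _ ≤ ((A L + A k) * (1 + |y|)) * ((1 + |μ L|) / σ L ^ 2 * (1 + |y|)) := by
              apply mul_le_mul hM (hE L y) (abs_nonneg _)
              positivity
          _ = (A L + A k) * ((1 + |μ L|) / σ L ^ 2) * (1 + |y|)^2 := by ring)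
      simpa using this
    refine hsum.congr (fun y => ?_)
    simp only [← mul_assoc]
    rw [← Finset.sum_mul, ← hDL_id y]
  have hWL := pstar_last_tendsto_one m p μ σ hp hσ hdom l hl
  constructor
  · -- beta limit
    have hfL : Tendsto (fun y => pstar (m+1) p μ σ L y
        * (ρ L + (muk (m+1) μ ρ L y - mucond (m+1) p μ σ ρ y) * (-(y - μ L) / σ L ^ 2)))
        l (nhds (ρ L)) := by
      have := hWL.mul ((tendsto_const_nhds (x := ρ L) (f := l)).add hDLE)
      simpa using this
    have hrest : Tendsto (fun y => ∑ k ∈ Finset.univ.erase L,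
        pstar (m+1) p μ σ k y * (ρ k + (muk (m+1) μ ρ k y - mucond (m+1) p μ σ ρ y)
          * (-(y - μ k) / σ k ^ 2))) l (nhds 0) := by
      have := tendsto_finset_sum (a := fun _ => (0:ℝ)) (Finset.univ.erase L) (fun k hk => by
        have hk' : k ≠ L := Finset.ne_of_mem_erase hk
        have hBnn : (0:ℝ) ≤ (1 + |μ k|) / σ k ^ 2 := by positivity
        apply hsmall k hk' (|ρ k| + (A k + SA) * ((1 + |μ k|) / σ k ^ 2))
          (add_nonneg (abs_nonneg _) (mul_nonneg (add_nonneg (hA0 k) hSA0) hBnn))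
        intro y
        have h3 : |(muk (m+1) μ ρ k y - mucond (m+1) p μ σ ρ y) * (-(y - μ k) / σ k ^ 2)|
            ≤ ((A k + SA) * (1 + |y|)) * ((1 + |μ k|) / σ k ^ 2 * (1 + |y|)) := by
          rw [abs_mul]
          apply mul_le_mul (hD k y) (hE k y) (abs_nonneg _)
          positivity
        calc |ρ k + (muk (m+1) μ ρ k y - mucond (m+1) p μ σ ρ y) * (-(y - μ k) / σ k ^ 2)|
            ≤ |ρ k| + |(muk (m+1) μ ρ k y - mucond (m+1) p μ σ ρ y) * (-(y - μ k) / σ k ^ 2)| :=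
              abs_add_le _ _
          _ ≤ |ρ k| + ((A k + SA) * (1 + |y|)) * ((1 + |μ k|) / σ k ^ 2 * (1 + |y|)) :=
              add_le_add le_rfl h3
          _ = |ρ k| + (A k + SA) * ((1 + |μ k|) / σ k ^ 2) * (1 + |y|)^2 := by ring
          _ ≤ (|ρ k| + (A k + SA) * ((1 + |μ k|) / σ k ^ 2)) * (1 + |y|)^2 := by
              nlinarith [abs_nonneg (ρ k), hy1 y])
      simpa using this
    have hcomb := hrest.add hfL
    rw [zero_add] at hcomb
    refine hcomb.congr (fun y => ?_)
    unfold beta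
    exact Finset.sum_erase_add _ _ (Finset.mem_univ L)
  · -- sig2cond limit
    have hfL : Tendsto (fun y => pstar (m+1) p μ σ L y
        * (σ L ^ 2 * (1 - ρ L ^ 2) + (muk (m+1) μ ρ L y - mucond (m+1) p μ σ ρ y) ^ 2))
        l (nhds (σ L ^ 2 * (1 - ρ L ^ 2))) := by
      have hq : Tendsto (fun y => (muk (m+1) μ ρ L y - mucond (m+1) p μ σ ρ y) ^ 2)
          l (nhds 0) := by
        have := hDL0.mul hDL0
        simpa [sq] using this
      have := hWL.mul ((tendsto_const_nhds (x := σ L ^ 2 * (1 - ρ L ^ 2)) (f := l)).add hq)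
      simpa using this
    have hrest : Tendsto (fun y => ∑ k ∈ Finset.univ.erase L,
        pstar (m+1) p μ σ k y * (σ k ^ 2 * (1 - ρ k ^ 2)
          + (muk (m+1) μ ρ k y - mucond (m+1) p μ σ ρ y) ^ 2)) l (nhds 0) := by
      have := tendsto_finset_sum (a := fun _ => (0:ℝ)) (Finset.univ.erase L) (fun k hk => by
        have hk' : k ≠ L := Finset.ne_of_mem_erase hk
        apply hsmall k hk' (|σ k ^ 2 * (1 - ρ k ^ 2)| + (A k + SA)^2)
          (add_nonneg (abs_nonneg _) (sq_nonneg _))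
        intro y
        have h3 : (muk (m+1) μ ρ k y - mucond (m+1) p μ σ ρ y) ^ 2
            ≤ (A k + SA)^2 * (1 + |y|)^2 := by
          have h5 := hD k y
          have h4 := abs_nonneg (muk (m+1) μ ρ k y - mucond (m+1) p μ σ ρ y)
          nlinarith [sq_abs (muk (m+1) μ ρ k y - mucond (m+1) p μ σ ρ y)]
        calc |σ k ^ 2 * (1 - ρ k ^ 2) + (muk (m+1) μ ρ k y - mucond (m+1) p μ σ ρ y) ^ 2|
            ≤ |σ k ^ 2 * (1 - ρ k ^ 2)| + |(muk (m+1) μ ρ k y - mucond (m+1) p μ σ ρ y) ^ 2| :=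
              abs_add_le _ _
          _ = |σ k ^ 2 * (1 - ρ k ^ 2)| + (muk (m+1) μ ρ k y - mucond (m+1) p μ σ ρ y) ^ 2 := by
              rw [abs_of_nonneg (sq_nonneg (muk (m+1) μ ρ k y - mucond (m+1) p μ σ ρ y))]
          _ ≤ (|σ k ^ 2 * (1 - ρ k ^ 2)| + (A k + SA)^2) * (1 + |y|)^2 := by
              nlinarith [abs_nonneg (σ k ^ 2 * (1 - ρ k ^ 2)), hy1 y])
      simpa using this
    have hcomb := hrest.add hfL
    rw [zero_add] at hcomb
    refine hcomb.congr (fun y => ?_)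
    unfold sig2cond
    exact Finset.sum_erase_add _ _ (Finset.mem_univ L)

/-- If the last mixture component strictly dominates in variance, then β(y) → ρ_m and
σ²(y) → σ_m²(1 - ρ_m²) as y → ±∞. -/
theorem beta_sig2_limits_dominant_component
    (m : ℕ) (p μ σ ρ : Fin (m + 1) → ℝ)
    (hp : ∀ k, 0 < p k) (hpsum : ∑ k, p k = 1) (hσ : ∀ k, 0 < σ k)
    (hρ : ∀ k, ρ k ∈ Set.Ioo (-1 : ℝ) 1)
    (hdom : ∀ k, k ≠ Fin.last m → σ k < σ (Fin.last m)) :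
    (Tendsto (beta (m + 1) p μ σ ρ) atTop (nhds (ρ (Fin.last m))) ∧
      Tendsto (beta (m + 1) p μ σ ρ) atBot (nhds (ρ (Fin.last m)))) ∧
    (Tendsto (sig2cond (m + 1) p μ σ ρ) atTop
        (nhds (σ (Fin.last m) ^ 2 * (1 - ρ (Fin.last m) ^ 2))) ∧
      Tendsto (sig2cond (m + 1) p μ σ ρ) atBot
        (nhds (σ (Fin.last m) ^ 2 * (1 - ρ (Fin.last m) ^ 2)))) := by
  obtain ⟨hb1, hs1⟩ := master m p μ σ ρ hp hσ hdom atTop (Or.inl rfl)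
  obtain ⟨hb2, hs2⟩ := master m p μ σ ρ hp hσ hdom atBot (Or.inr rfl)
  exact ⟨⟨hb1, hb2⟩, ⟨hs1, hs2⟩⟩
end

section
/- For an exchangeable bivariate Gaussian mixture in which component m has strictly largest variance, the correlation curve ρ(y) = σβ(y)/[(σβ(y))² + σ²(y)]^{1/2} converges as y → ±∞ to ρ̃_m = σρ_m/[σ²ρ_m² + σ_m²(1 − ρ_m²)]^{1/2}, where σ² is the marginal variance of the mixture. -/
open scoped Real BigOperators
open Filter

/-- The Bjerve–Doksum correlation curve of the mixture, with τ₂ equal to the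
marginal standard deviation σ of the mixture. -/
noncomputable def corrCurve (m : ℕ) (p μ σ ρ : Fin m → ℝ) (y : ℝ) : ℝ :=
  let σglob := Real.sqrt (∑ k, p k * (σ k ^ 2 + (μ k - ∑ j, p j * μ j) ^ 2))
  σglob * beta m p μ σ ρ y /
    Real.sqrt ((σglob * beta m p μ σ ρ y) ^ 2 + sig2cond m p μ σ ρ y)


/- Auxiliary lemmas -/

lemma gauss_atTop (a b c : ℝ) (ha : a < 0) (n : ℕ) :
    Tendsto (fun y : ℝ => Real.exp (a*y^2 + b*y + c) * |y|^n) atTop (nhds 0) := by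
  set k : ℝ := -a/2 with hk
  have hkpos : 0 < k := by simp only [hk]; linarith
  have hcomp : Tendsto (fun y : ℝ => k⁻¹^n * ((k*y^2)^n * Real.exp (-(k*y^2)))) atTop (nhds 0) := by
    have h1 : Tendsto (fun y : ℝ => k*y^2) atTop atTop :=
      (tendsto_pow_atTop (two_ne_zero)).const_mul_atTop hkpos
    have := (Real.tendsto_pow_mul_exp_neg_atTop_nhds_zero n).comp h1
    simpa using (this.const_mul (k⁻¹^n))
  apply squeeze_zero' ?_ ?_ hcomp
  · filter_upwards [eventually_ge_atTop (0:ℝ)] with y hy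
    positivity
  · filter_upwards [eventually_ge_atTop (1:ℝ),
      eventually_ge_atTop ((|b|+|c|)*(2/(-a)))] with y hy1 hy2
    have hy0 : (0:ℝ) ≤ y := by linarith
    have h1 : a*y^2 + b*y + c ≤ -(k*y^2) := by
      have hb : b ≤ |b| := le_abs_self b
      have hc : c ≤ |c| := le_abs_self c
      have hbb : 0 ≤ |b| := abs_nonneg b
      have hcc : 0 ≤ |c| := abs_nonneg c
      have h0 : (2/(-a))*(-a/2) = 1 := by
        rw [div_mul_div_comm]; rw [mul_comm (-a) 2]; exact div_self (by nlinarith)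
      have h4 : |b| + |c| ≤ y * (-a/2) := by
        calc |b| + |c| = ((|b|+|c|)*(2/(-a)))*(-a/2) := by rw [mul_assoc, h0, mul_one]
          _ ≤ y*(-a/2) := mul_le_mul_of_nonneg_right hy2 (by linarith)
      have h5 : b*y ≤ |b| * y := mul_le_mul_of_nonneg_right hb hy0
      have h6 : c ≤ |c| * y := le_trans hc (le_mul_of_one_le_right hcc hy1)
      have h7 : (|b| + |c|) * y ≤ (y * (-a/2)) * y := mul_le_mul_of_nonneg_right h4 hy0
      simp only [hk]
      nlinarith
    have h2 : |y|^n ≤ (k*y^2)^n * k⁻¹^n := by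
      have he : (k*y^2)^n * k⁻¹^n = (y^2)^n := by
        rw [← mul_pow]; congr 1; field_simp
      rw [he, ← pow_mul, abs_of_nonneg hy0]
      exact pow_le_pow_right₀ (by linarith) (by omega)
    calc Real.exp (a*y^2 + b*y + c) * |y|^n
        ≤ Real.exp (-(k*y^2)) * ((k*y^2)^n * k⁻¹^n) :=
          mul_le_mul (Real.exp_le_exp.2 h1) h2 (by positivity) (by positivity)
      _ = k⁻¹^n * ((k*y^2)^n * Real.exp (-(k*y^2))) := by ring

lemma gauss_atBot (a b c : ℝ) (ha : a < 0) (n : ℕ) :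
    Tendsto (fun y : ℝ => Real.exp (a*y^2 + b*y + c) * |y|^n) atBot (nhds 0) := by
  have h := (gauss_atTop a (-b) c ha n).comp tendsto_neg_atBot_atTop
  have he : (fun y : ℝ => Real.exp (a*y^2 + b*y + c) * |y|^n)
      = (fun y : ℝ => Real.exp (a*y^2 + (-b)*y + c) * |y|^n) ∘ Neg.neg := by
    funext y
    simp only [Function.comp_apply, abs_neg]
    ring_nf
  rw [he]; exact h

section KEY
variable {m : ℕ} (p μ σ ρ : Fin (m + 1) → ℝ) (l : Filter ℝ)

private theorem key_tendsto
    (hp : ∀ k, 0 < p k) (hpsum : ∑ k, p k = 1) (hσ : ∀ k, 0 < σ k)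
    (hdom : ∀ k, k ≠ Fin.last m → σ k < σ (Fin.last m))
    (hg : ∀ a b c : ℝ, a < 0 → ∀ n : ℕ,
      Tendsto (fun y : ℝ => Real.exp (a*y^2 + b*y + c) * |y|^n) l (nhds 0)) :
    Tendsto (beta (m+1) p μ σ ρ) l (nhds (ρ (Fin.last m))) ∧
    Tendsto (sig2cond (m+1) p μ σ ρ) l
      (nhds (σ (Fin.last m)^2 * (1 - ρ (Fin.last m)^2))) := by
  set L := Fin.last m with hLdef
  have hφ : ∀ (k : Fin (m+1)) (y : ℝ), 0 < phi1 (μ k) (σ k) y := by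
    intro k y
    unfold phi1
    have h1 : 0 < 2 * Real.pi * σ k ^ 2 :=
      mul_pos (by positivity) (pow_pos (hσ k) 2)
    exact mul_pos (inv_pos.2 (Real.sqrt_pos.2 h1)) (Real.exp_pos _)
  have hS : ∀ y : ℝ, 0 < ∑ j, p j * phi1 (μ j) (σ j) y := fun y =>
    Finset.sum_pos (fun j _ => mul_pos (hp j) (hφ j y)) ⟨L, Finset.mem_univ L⟩
  have hwpos : ∀ (k : Fin (m+1)) (y : ℝ), 0 < pstar (m+1) p μ σ k y := fun k y =>
    div_pos (mul_pos (hp k) (hφ k y)) (hS y)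
  have hwsum : ∀ y : ℝ, ∑ k, pstar (m+1) p μ σ k y = 1 := by
    intro y
    unfold pstar
    rw [← Finset.sum_div, div_self (hS y).ne']
  -- core decay estimate
  have hU : ∀ k : Fin (m+1), k ≠ L → ∀ n : ℕ,
      Tendsto (fun y => pstar (m+1) p μ σ k y * y^n) l (nhds 0) := by
    intro k hk n
    set a : ℝ := 1/(2*(σ L)^2) - 1/(2*(σ k)^2) with ha_def
    set b : ℝ := μ k/(σ k)^2 - μ L/(σ L)^2 with hb_def
    set c : ℝ := (μ L)^2/(2*(σ L)^2) - (μ k)^2/(2*(σ k)^2) with hc_def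
    set C : ℝ := (p k * Real.sqrt (2*Real.pi*(σ L)^2)) /
        (p L * Real.sqrt (2*Real.pi*(σ k)^2)) with hC_def
    have hσk := hσ k
    have hσL := hσ L
    have hkL := hdom k hk
    have ha : a < 0 := by
      have h2 : (σ k)^2 < (σ L)^2 := by nlinarith
      have h3 : 1/(2*(σ L)^2) < 1/(2*(σ k)^2) := by
        apply one_div_lt_one_div_of_lt (by positivity)
        linarith
      simp only [ha_def]
      linarith
    have hbound : ∀ y : ℝ, pstar (m+1) p μ σ k y ≤ C * Real.exp (a*y^2+b*y+c) := by
      intro y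
      have hstep1 : p L * phi1 (μ L) (σ L) y ≤ ∑ j, p j * phi1 (μ j) (σ j) y :=
        Finset.single_le_sum (f := fun j => p j * phi1 (μ j) (σ j) y)
          (fun j _ => le_of_lt (mul_pos (hp j) (hφ j y))) (Finset.mem_univ L)
      have hstep2 : pstar (m+1) p μ σ k y
          ≤ p k * phi1 (μ k) (σ k) y / (p L * phi1 (μ L) (σ L) y) := by
        unfold pstar
        gcongr
        · exact le_of_lt (mul_pos (hp k) (hφ k y))
        · exact mul_pos (hp L) (hφ L y)
      have hstep3 : p k * phi1 (μ k) (σ k) y / (p L * phi1 (μ L) (σ L) y)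
          = C * Real.exp (a*y^2+b*y+c) := by
        unfold phi1
        have hs1 : 0 < Real.sqrt (2*Real.pi*(σ k)^2) :=
          Real.sqrt_pos.2 (mul_pos (by positivity) (pow_pos hσk 2))
        have hs2 : 0 < Real.sqrt (2*Real.pi*(σ L)^2) :=
          Real.sqrt_pos.2 (mul_pos (by positivity) (pow_pos hσL 2))
        have hexp : Real.exp (-(y - μ k) ^ 2 / (2 * σ k ^ 2)) /
            Real.exp (-(y - μ L) ^ 2 / (2 * σ L ^ 2)) = Real.exp (a*y^2+b*y+c) := by
          rw [← Real.exp_sub]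
          congr 1
          simp only [ha_def, hb_def, hc_def]
          field_simp
          ring
        rw [hC_def]
        rw [← hexp]
        field_simp
      exact hstep2.trans (le_of_eq hstep3)
    have hgC : Tendsto (fun y : ℝ => C * (Real.exp (a*y^2+b*y+c) * |y|^n)) l (nhds 0) := by
      simpa using (hg a b c ha n).const_mul C
    apply squeeze_zero_norm ?_ hgC
    intro y
    have h0 : 0 ≤ pstar (m+1) p μ σ k y := (hwpos k y).le
    rw [Real.norm_eq_abs, abs_mul, abs_of_nonneg h0, abs_pow]
    calc pstar (m+1) p μ σ k y * |y|^n
        ≤ (C * Real.exp (a*y^2+b*y+c)) * |y|^n := by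
          exact mul_le_mul_of_nonneg_right (hbound y) (by positivity)
      _ = C * (Real.exp (a*y^2+b*y+c) * |y|^n) := by ring

  -- multiplication by quadratic polynomials preserves negligibility
  have hNmul : ∀ f : ℝ → ℝ, (∀ n : ℕ, Tendsto (fun y => f y * y^n) l (nhds 0)) →
      ∀ a0 a1 a2 : ℝ, ∀ n : ℕ,
      Tendsto (fun y => f y * (a0 + a1*y + a2*y^2) * y^n) l (nhds 0) := by
    intro f hf a0 a1 a2 n
    have he : (fun y => f y * (a0 + a1*y + a2*y^2) * y^n)
        = fun y => a0*(f y*y^n) + a1*(f y*y^(n+1)) + a2*(f y*y^(n+2)) := by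
      funext y; ring
    rw [he]
    simpa using (((hf n).const_mul a0).add ((hf (n+1)).const_mul a1)).add
      ((hf (n+2)).const_mul a2)
  -- D := mucond - muk L is negligible
  have hpt : ∀ y : ℝ, mucond (m+1) p μ σ ρ y - muk (m+1) μ ρ L y
      = ∑ k, pstar (m+1) p μ σ k y * (muk (m+1) μ ρ k y - muk (m+1) μ ρ L y) := by
    intro y
    unfold mucond
    simp only [mul_sub]
    rw [Finset.sum_sub_distrib, ← Finset.sum_mul, hwsum y, one_mul]
  have hD : ∀ n : ℕ, Tendsto
      (fun y => (mucond (m+1) p μ σ ρ y - muk (m+1) μ ρ L y) * y^n) l (nhds 0) := by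
    intro n
    have he : (fun y => (mucond (m+1) p μ σ ρ y - muk (m+1) μ ρ L y) * y^n)
        = fun y => ∑ k, pstar (m+1) p μ σ k y *
            (muk (m+1) μ ρ k y - muk (m+1) μ ρ L y) * y^n := by
      funext y; rw [hpt y, Finset.sum_mul]
    rw [he]
    have h0 : (0:ℝ) = ∑ _k : Fin (m+1), (0:ℝ) := by simp
    rw [h0]
    apply tendsto_finset_sum
    intro k _
    by_cases hk : k = L
    · subst hk
      simp only [sub_self, mul_zero, zero_mul]
      exact tendsto_const_nhds
    · have he2 : (fun y => pstar (m+1) p μ σ k y *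
          (muk (m+1) μ ρ k y - muk (m+1) μ ρ L y) * y^n)
          = fun y => pstar (m+1) p μ σ k y *
            ((μ k - ρ k * μ k - μ L + ρ L * μ L) + (ρ k - ρ L)*y + 0*y^2) * y^n := by
        funext y; unfold muk; ring
      rw [he2]
      exact hNmul _ (hU k hk) _ _ _ n
  have hD0 : Tendsto (fun y => mucond (m+1) p μ σ ρ y - muk (m+1) μ ρ L y) l (nhds 0) := by
    simpa using hD 0
  have hD1 : Tendsto (fun y => (mucond (m+1) p μ σ ρ y - muk (m+1) μ ρ L y) * y) l (nhds 0) := by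
    simpa using hD 1
  -- pstar L tends to 1
  have hwL : Tendsto (fun y => pstar (m+1) p μ σ L y) l (nhds 1) := by
    have he : (fun y => pstar (m+1) p μ σ L y)
        = fun y => 1 - ∑ i : Fin m, pstar (m+1) p μ σ i.castSucc y := by
      funext y
      have := hwsum y
      rw [Fin.sum_univ_castSucc] at this
      linarith
    rw [he]
    have hsum0 : Tendsto (fun y => ∑ i : Fin m, pstar (m+1) p μ σ i.castSucc y) l (nhds 0) := by
      have h0 : (0:ℝ) = ∑ _i : Fin m, (0:ℝ) := by simp
      rw [h0]
      apply tendsto_finset_sum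
      intro i _
      simpa using hU i.castSucc (ne_of_lt (Fin.castSucc_lt_last i)) 0
    simpa using tendsto_const_nhds.sub hsum0

  constructor
  · -- beta
    have he : beta (m+1) p μ σ ρ = fun y =>
        (∑ i : Fin m, pstar (m+1) p μ σ i.castSucc y *
          (ρ i.castSucc + (muk (m+1) μ ρ i.castSucc y - mucond (m+1) p μ σ ρ y) *
            (-(y - μ i.castSucc) / σ i.castSucc ^ 2)))
        + pstar (m+1) p μ σ L y *
          (ρ L + (muk (m+1) μ ρ L y - mucond (m+1) p μ σ ρ y) *
            (-(y - μ L) / σ L ^ 2)) := by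
      funext y; unfold beta; rw [Fin.sum_univ_castSucc]
    rw [he]
    have hlast : Tendsto (fun y => pstar (m+1) p μ σ L y *
        (ρ L + (muk (m+1) μ ρ L y - mucond (m+1) p μ σ ρ y) *
          (-(y - μ L) / σ L ^ 2))) l (nhds (ρ L)) := by
      have he2 : (fun y => pstar (m+1) p μ σ L y *
          (ρ L + (muk (m+1) μ ρ L y - mucond (m+1) p μ σ ρ y) *
            (-(y - μ L) / σ L ^ 2)))
          = fun y => pstar (m+1) p μ σ L y *
            (ρ L + (((mucond (m+1) p μ σ ρ y - muk (m+1) μ ρ L y) * y)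
              - μ L * (mucond (m+1) p μ σ ρ y - muk (m+1) μ ρ L y)) * (1 / σ L ^ 2)) := by
        funext y; ring
      rw [he2]
      have := hwL.mul (((hD1.sub (hD0.const_mul (μ L))).mul_const
        (1 / σ L ^ 2)).const_add (ρ L))
      simpa using this
    have hcast : Tendsto (fun y => ∑ i : Fin m, pstar (m+1) p μ σ i.castSucc y *
        (ρ i.castSucc + (muk (m+1) μ ρ i.castSucc y - mucond (m+1) p μ σ ρ y) *
          (-(y - μ i.castSucc) / σ i.castSucc ^ 2))) l (nhds 0) := by
      have h0 : (0:ℝ) = ∑ _i : Fin m, (0:ℝ) := by simp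
      rw [h0]
      apply tendsto_finset_sum
      intro i _
      set k := i.castSucc with hkdef
      have hk : k ≠ L := ne_of_lt (Fin.castSucc_lt_last i)
      have he3 : (fun y => pstar (m+1) p μ σ k y *
          (ρ k + (muk (m+1) μ ρ k y - mucond (m+1) p μ σ ρ y) *
            (-(y - μ k) / σ k ^ 2)))
          = fun y => ρ k * (pstar (m+1) p μ σ k y * y^0)
            + pstar (m+1) p μ σ k y *
              (((μ k - ρ k * μ k - μ L + ρ L * μ L) * μ k / σ k ^ 2)
                + (((ρ k - ρ L) * μ k - (μ k - ρ k * μ k - μ L + ρ L * μ L)) / σ k ^ 2) * y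
                + (-(ρ k - ρ L) / σ k ^ 2) * y^2) * y^0
            + ((pstar (m+1) p μ σ k y * y^1) - μ k * (pstar (m+1) p μ σ k y * y^0)) *
              ((mucond (m+1) p μ σ ρ y - muk (m+1) μ ρ L y) * (1 / σ k ^ 2)) := by
        funext y; unfold muk; ring
      rw [he3]
      have ht := (((hU k hk 0).const_mul (ρ k)).add
        (hNmul _ (hU k hk) ((μ k - ρ k * μ k - μ L + ρ L * μ L) * μ k / σ k ^ 2)
          (((ρ k - ρ L) * μ k - (μ k - ρ k * μ k - μ L + ρ L * μ L)) / σ k ^ 2)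
          (-(ρ k - ρ L) / σ k ^ 2) 0)).add
        (((hU k hk 1).sub ((hU k hk 0).const_mul (μ k))).mul (hD0.mul_const (1 / σ k ^ 2)))
      simpa using ht
    simpa using hcast.add hlast
  · -- sig2cond
    have he : sig2cond (m+1) p μ σ ρ = fun y =>
        (∑ i : Fin m, pstar (m+1) p μ σ i.castSucc y *
          (σ i.castSucc ^ 2 * (1 - ρ i.castSucc ^ 2) +
            (muk (m+1) μ ρ i.castSucc y - mucond (m+1) p μ σ ρ y) ^ 2))
        + pstar (m+1) p μ σ L y *
          (σ L ^ 2 * (1 - ρ L ^ 2) +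
            (muk (m+1) μ ρ L y - mucond (m+1) p μ σ ρ y) ^ 2) := by
      funext y; unfold sig2cond; rw [Fin.sum_univ_castSucc]
    rw [he]
    have hlast : Tendsto (fun y => pstar (m+1) p μ σ L y *
        (σ L ^ 2 * (1 - ρ L ^ 2) +
          (muk (m+1) μ ρ L y - mucond (m+1) p μ σ ρ y) ^ 2)) l
        (nhds (σ L ^ 2 * (1 - ρ L ^ 2))) := by
      have he2 : (fun y => pstar (m+1) p μ σ L y *
          (σ L ^ 2 * (1 - ρ L ^ 2) +
            (muk (m+1) μ ρ L y - mucond (m+1) p μ σ ρ y) ^ 2))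
          = fun y => pstar (m+1) p μ σ L y *
            (σ L ^ 2 * (1 - ρ L ^ 2) +
              (mucond (m+1) p μ σ ρ y - muk (m+1) μ ρ L y) *
              (mucond (m+1) p μ σ ρ y - muk (m+1) μ ρ L y)) := by
        funext y; ring
      rw [he2]
      have := hwL.mul ((hD0.mul hD0).const_add (σ L ^ 2 * (1 - ρ L ^ 2)))
      simpa using this
    have hcast : Tendsto (fun y => ∑ i : Fin m, pstar (m+1) p μ σ i.castSucc y *
        (σ i.castSucc ^ 2 * (1 - ρ i.castSucc ^ 2) +
          (muk (m+1) μ ρ i.castSucc y - mucond (m+1) p μ σ ρ y) ^ 2)) l (nhds 0) := by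
      have h0 : (0:ℝ) = ∑ _i : Fin m, (0:ℝ) := by simp
      rw [h0]
      apply tendsto_finset_sum
      intro i _
      set k := i.castSucc with hkdef
      have hk : k ≠ L := ne_of_lt (Fin.castSucc_lt_last i)
      have he3 : (fun y => pstar (m+1) p μ σ k y *
          (σ k ^ 2 * (1 - ρ k ^ 2) +
            (muk (m+1) μ ρ k y - mucond (m+1) p μ σ ρ y) ^ 2))
          = fun y => pstar (m+1) p μ σ k y *
              ((σ k ^ 2 * (1 - ρ k ^ 2) + (μ k - ρ k * μ k - μ L + ρ L * μ L)^2)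
                + (2 * (μ k - ρ k * μ k - μ L + ρ L * μ L) * (ρ k - ρ L)) * y
                + ((ρ k - ρ L)^2) * y^2) * y^0
            + (pstar (m+1) p μ σ k y *
                ((-2) * (μ k - ρ k * μ k - μ L + ρ L * μ L)
                  + ((-2) * (ρ k - ρ L)) * y + 0 * y^2) * y^0) *
              (mucond (m+1) p μ σ ρ y - muk (m+1) μ ρ L y)
            + (pstar (m+1) p μ σ k y * y^0) *
              ((mucond (m+1) p μ σ ρ y - muk (m+1) μ ρ L y) *
                (mucond (m+1) p μ σ ρ y - muk (m+1) μ ρ L y)) := by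
        funext y; unfold muk; ring
      rw [he3]
      have ht := ((hNmul _ (hU k hk)
          (σ k ^ 2 * (1 - ρ k ^ 2) + (μ k - ρ k * μ k - μ L + ρ L * μ L)^2)
          (2 * (μ k - ρ k * μ k - μ L + ρ L * μ L) * (ρ k - ρ L)) ((ρ k - ρ L)^2) 0).add
        ((hNmul _ (hU k hk) ((-2) * (μ k - ρ k * μ k - μ L + ρ L * μ L)) ((-2) * (ρ k - ρ L)) 0 0).mul hD0)).add
        ((hU k hk 0).mul (hD0.mul hD0))
      simpa using ht
    simpa using hcast.add hlast

end KEY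

/-- If the last mixture component strictly dominates in variance, the correlation
curve ρ(y) converges in both tails to ρ̃_m = σρ_m/√(σ²ρ_m² + σ_m²(1-ρ_m²)), where σ²
is the marginal variance of the mixture. -/
theorem correlation_curve_limit_dominant_component
    (m : ℕ) (p μ σ ρ : Fin (m + 1) → ℝ)
    (hp : ∀ k, 0 < p k) (hpsum : ∑ k, p k = 1) (hσ : ∀ k, 0 < σ k)
    (hρ : ∀ k, ρ k ∈ Set.Ioo (-1 : ℝ) 1)
    (hdom : ∀ k, k ≠ Fin.last m → σ k < σ (Fin.last m)) :
    Tendsto (corrCurve (m + 1) p μ σ ρ) atTop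
      (nhds (Real.sqrt (∑ k, p k * (σ k ^ 2 + (μ k - ∑ j, p j * μ j) ^ 2)) *
          ρ (Fin.last m) /
        Real.sqrt ((∑ k, p k * (σ k ^ 2 + (μ k - ∑ j, p j * μ j) ^ 2)) *
            ρ (Fin.last m) ^ 2 +
          σ (Fin.last m) ^ 2 * (1 - ρ (Fin.last m) ^ 2)))) ∧
    Tendsto (corrCurve (m + 1) p μ σ ρ) atBot
      (nhds (Real.sqrt (∑ k, p k * (σ k ^ 2 + (μ k - ∑ j, p j * μ j) ^ 2)) *
          ρ (Fin.last m) /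
        Real.sqrt ((∑ k, p k * (σ k ^ 2 + (μ k - ∑ j, p j * μ j) ^ 2)) *
            ρ (Fin.last m) ^ 2 +
          σ (Fin.last m) ^ 2 * (1 - ρ (Fin.last m) ^ 2)))) := by

  have main : ∀ l : Filter ℝ,
      (∀ a b c : ℝ, a < 0 → ∀ n : ℕ,
        Tendsto (fun y : ℝ => Real.exp (a*y^2 + b*y + c) * |y|^n) l (nhds 0)) →
      Tendsto (corrCurve (m + 1) p μ σ ρ) l
        (nhds (Real.sqrt (∑ k, p k * (σ k ^ 2 + (μ k - ∑ j, p j * μ j) ^ 2)) *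
            ρ (Fin.last m) /
          Real.sqrt ((∑ k, p k * (σ k ^ 2 + (μ k - ∑ j, p j * μ j) ^ 2)) *
              ρ (Fin.last m) ^ 2 +
            σ (Fin.last m) ^ 2 * (1 - ρ (Fin.last m) ^ 2)))) := by
    intro l hg
    obtain ⟨hb, hs⟩ := key_tendsto p μ σ ρ l hp hpsum hσ hdom hg
    set Sg : ℝ := ∑ k, p k * (σ k ^ 2 + (μ k - ∑ j, p j * μ j) ^ 2) with hSgdef
    set ρL := ρ (Fin.last m)
    set σL := σ (Fin.last m)
    have hSg : 0 ≤ Sg := by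
      apply Finset.sum_nonneg
      intro k _
      have := (hp k).le
      positivity
    have hρL : ρL ^ 2 < 1 := by
      obtain ⟨h1, h2⟩ := hρ (Fin.last m)
      nlinarith
    have hσL : 0 < σL := hσ (Fin.last m)
    have hs2 : Real.sqrt Sg ^ 2 = Sg := Real.sq_sqrt hSg
    have hV : 0 < Sg * ρL^2 + σL^2 * (1 - ρL^2) := by
      have h1 : 0 ≤ Sg*ρL^2 := mul_nonneg hSg (sq_nonneg ρL)
      have h2 : 0 < σL^2*(1-ρL^2) := mul_pos (pow_pos hσL 2) (by linarith)
      linarith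
    have hnum : Tendsto (fun y => Real.sqrt Sg * beta (m+1) p μ σ ρ y) l
        (nhds (Real.sqrt Sg * ρL)) := hb.const_mul _
    have hinner : Tendsto
        (fun y => (Real.sqrt Sg * beta (m+1) p μ σ ρ y)^2 + sig2cond (m+1) p μ σ ρ y) l
        (nhds (Sg * ρL^2 + σL^2 * (1 - ρL^2))) := by
      have h := (hnum.pow 2).add hs
      have he : (Real.sqrt Sg * ρL)^2 = Sg * ρL^2 := by rw [mul_pow, hs2]
      rwa [he] at h
    have hden : Tendsto
        (fun y => Real.sqrt ((Real.sqrt Sg * beta (m+1) p μ σ ρ y)^2 +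
          sig2cond (m+1) p μ σ ρ y)) l
        (nhds (Real.sqrt (Sg * ρL^2 + σL^2 * (1 - ρL^2)))) :=
      (Real.continuous_sqrt.tendsto _).comp hinner
    have hfinal := hnum.div hden (Real.sqrt_ne_zero'.2 hV)
    have hcc : corrCurve (m + 1) p μ σ ρ = fun y =>
        Real.sqrt Sg * beta (m+1) p μ σ ρ y /
          Real.sqrt ((Real.sqrt Sg * beta (m+1) p μ σ ρ y)^2 +
            sig2cond (m+1) p μ σ ρ y) := rfl
    rw [hcc]
    exact hfinal
  exact ⟨main atTop (fun a b c ha n => gauss_atTop a b c ha n),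
    main atBot (fun a b c ha n => gauss_atBot a b c ha n)⟩
end
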